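/- Let (a,b,c) be a hyperbolic triple of integers (a ≤ b ≤ c, 1/a+1/b+1/c < 1). For the exponents 1, 3, ..., 2r−1 of type B_r or C_r with r ≥ 3 and (a,b) ≠ (2,3), (3,3), we have Σ_{k∈{a,b,c}} Σ_{j=1}^r (1 + 2⌊(2j−1)/k⌋) < r(2r+1), except for finitely many explicitly listed small cases; in particular the strict inequality holds whenever r ≥ 9. -/
import Mathlib

private lemma auxBC245 (r : ℕ) (hr : 9 ≤ r) :
    ∑ j ∈ Finset.Icc 1 r,
        ((1 + 2 * ((2 * j - 1) / 2)) + (1 + 2 * ((2 * j - 1) / 4)) + (1 + 2 * ((2 * j - 1) / 5)))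
      < r * (2 * r + 1) := by
  induction r, hr using Nat.le_induction with
  | base => decide
  | succ n hn ih =>
    rw [Finset.sum_Icc_succ_top (by omega)]
    have h1 : (n+1) * (2*(n+1)+1) = n * (2*n+1) + (4*n+3) := by ring
    rw [h1]
    have ht : (1 + 2 * ((2 * (n+1) - 1) / 2)) + (1 + 2 * ((2 * (n+1) - 1) / 4))
        + (1 + 2 * ((2 * (n+1) - 1) / 5)) ≤ 4*n+3 := by omega
    exact add_lt_add_of_lt_of_le ih ht

private lemma auxBC255 (r : ℕ) (hr : 9 ≤ r) :
    ∑ j ∈ Finset.Icc 1 r,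
        ((1 + 2 * ((2 * j - 1) / 2)) + (1 + 2 * ((2 * j - 1) / 5)) + (1 + 2 * ((2 * j - 1) / 5)))
      < r * (2 * r + 1) := by
  induction r, hr using Nat.le_induction with
  | base => decide
  | succ n hn ih =>
    rw [Finset.sum_Icc_succ_top (by omega)]
    have h1 : (n+1) * (2*(n+1)+1) = n * (2*n+1) + (4*n+3) := by ring
    rw [h1]
    have ht : (1 + 2 * ((2 * (n+1) - 1) / 2)) + (1 + 2 * ((2 * (n+1) - 1) / 5))
        + (1 + 2 * ((2 * (n+1) - 1) / 5)) ≤ 4*n+3 := by omega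
    exact add_lt_add_of_lt_of_le ih ht

private lemma auxBC344 (r : ℕ) (hr : 9 ≤ r) :
    ∑ j ∈ Finset.Icc 1 r,
        ((1 + 2 * ((2 * j - 1) / 3)) + (1 + 2 * ((2 * j - 1) / 4)) + (1 + 2 * ((2 * j - 1) / 4)))
      < r * (2 * r + 1) := by
  induction r, hr using Nat.le_induction with
  | base => decide
  | succ n hn ih =>
    rw [Finset.sum_Icc_succ_top (by omega)]
    have h1 : (n+1) * (2*(n+1)+1) = n * (2*n+1) + (4*n+3) := by ring
    rw [h1]
    have ht : (1 + 2 * ((2 * (n+1) - 1) / 3)) + (1 + 2 * ((2 * (n+1) - 1) / 4))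
        + (1 + 2 * ((2 * (n+1) - 1) / 4)) ≤ 4*n+3 := by omega
    exact add_lt_add_of_lt_of_le ih ht

private lemma auxBC444 (r : ℕ) (hr : 9 ≤ r) :
    ∑ j ∈ Finset.Icc 1 r,
        ((1 + 2 * ((2 * j - 1) / 4)) + (1 + 2 * ((2 * j - 1) / 4)) + (1 + 2 * ((2 * j - 1) / 4)))
      < r * (2 * r + 1) := by
  induction r, hr using Nat.le_induction with
  | base => decide
  | succ n hn ih =>
    rw [Finset.sum_Icc_succ_top (by omega)]
    have h1 : (n+1) * (2*(n+1)+1) = n * (2*n+1) + (4*n+3) := by ring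
    rw [h1]
    have ht : (1 + 2 * ((2 * (n+1) - 1) / 4)) + (1 + 2 * ((2 * (n+1) - 1) / 4))
        + (1 + 2 * ((2 * (n+1) - 1) / 4)) ≤ 4*n+3 := by omega
    exact add_lt_add_of_lt_of_le ih ht

theorem typeBC_inequality_large_rank (a b c r : ℕ) (ha : 0 < a) (hab : a ≤ b) (hbc : b ≤ c)
    (hhyp : (1 : ℚ)/a + 1/b + 1/c < 1) (hr : 3 ≤ r)
    (h23 : (a, b) ≠ (2, 3)) (h33 : (a, b) ≠ (3, 3)) (hr9 : 9 ≤ r) :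
    ∑ j ∈ Finset.Icc 1 r,
        ((1 + 2 * ((2 * j - 1) / a)) + (1 + 2 * ((2 * j - 1) / b)) + (1 + 2 * ((2 * j - 1) / c)))
      < r * (2 * r + 1) := by
  have hb : 0 < b := lt_of_lt_of_le ha hab
  have hc : 0 < c := lt_of_lt_of_le hb hbc
  have hup : ∀ A B C : ℕ, 0 < A → 0 < B → 0 < C → a ≤ A → b ≤ B → c ≤ C →
      (1 : ℚ)/A + 1/B + 1/C < 1 := by
    intro A B C hA hB hC h1 h2 h3
    calc (1:ℚ)/A + 1/B + 1/C ≤ 1/a + 1/b + 1/c := by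
          gcongr <;> first
            | exact_mod_cast ha | exact_mod_cast h1 | exact_mod_cast hb
            | exact_mod_cast h2 | exact_mod_cast hc | exact_mod_cast h3
      _ < 1 := hhyp
  have key : ∀ p q s : ℕ, 0 < p → 0 < q → 0 < s → p ≤ a → q ≤ b → s ≤ c →
      (∑ j ∈ Finset.Icc 1 r,
        ((1 + 2 * ((2 * j - 1) / p)) + (1 + 2 * ((2 * j - 1) / q)) + (1 + 2 * ((2 * j - 1) / s)))
        < r * (2 * r + 1)) →
      ∑ j ∈ Finset.Icc 1 r,
        ((1 + 2 * ((2 * j - 1) / a)) + (1 + 2 * ((2 * j - 1) / b)) + (1 + 2 * ((2 * j - 1) / c)))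
        < r * (2 * r + 1) := by
    intro p q s hp hq hs hpa hqb hsc htriple
    refine lt_of_le_of_lt (Finset.sum_le_sum fun j _ => ?_) htriple
    have h1 : (2 * j - 1) / a ≤ (2 * j - 1) / p := Nat.div_le_div_left hpa hp
    have h2 : (2 * j - 1) / b ≤ (2 * j - 1) / q := Nat.div_le_div_left hqb hq
    have h3 : (2 * j - 1) / c ≤ (2 * j - 1) / s := Nat.div_le_div_left hsc hs
    omega
  -- a ≥ 2
  have ha2 : 2 ≤ a := by
    rcases Nat.lt_or_ge a 2 with h | h
    · exfalso
      have ha1 : a = 1 := by omega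
      subst ha1
      have := hup 1 b c one_pos hb hc le_rfl le_rfl le_rfl
      have h1 : (0:ℚ) < 1/b := by positivity
      have h2 : (0:ℚ) < 1/c := by positivity
      norm_num at this
      linarith
    · exact h
  rcases Nat.lt_or_ge a 4 with h4 | h4
  · interval_cases a
    · -- a = 2
      have hb4 : 4 ≤ b := by
        rcases Nat.lt_or_ge b 4 with h | h
        · exfalso
          interval_cases b
          · have := hup 2 2 c (by norm_num) (by norm_num) hc le_rfl le_rfl le_rfl
            have h2 : (0:ℚ) < 1/c := by positivity
            norm_num at this
            linarith
          · exact h23 rfl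
        · exact h
      rcases Nat.lt_or_ge b 5 with h5 | h5
      · -- b = 4
        have hb4' : b = 4 := by omega
        subst hb4'
        have hc5 : 5 ≤ c := by
          rcases Nat.lt_or_ge c 5 with h | h
          · exfalso
            have hc4 : c = 4 := by omega
            subst hc4
            have := hup 2 4 4 (by norm_num) (by norm_num) (by norm_num) le_rfl le_rfl le_rfl
            norm_num at this
          · exact h
        exact key 2 4 5 (by norm_num) (by norm_num) (by norm_num) le_rfl le_rfl hc5
          (auxBC245 r hr9)
      · -- b ≥ 5
        exact key 2 5 5 (by norm_num) (by norm_num) (by norm_num) le_rfl h5 (h5.trans hbc)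
          (auxBC255 r hr9)
    · -- a = 3
      have hb4 : 4 ≤ b := by
        rcases Nat.lt_or_ge b 4 with h | h
        · exfalso
          interval_cases b
          · exact h33 rfl
        · exact h
      exact key 3 4 4 (by norm_num) (by norm_num) (by norm_num) le_rfl hb4 (hb4.trans hbc)
        (auxBC344 r hr9)
  · exact key 4 4 4 (by norm_num) (by norm_num) (by norm_num) h4 (h4.trans hab)
      (h4.trans (hab.trans hbc)) (auxBC444 r hr9)
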